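/- Let v ∈ 𝓕 be a basis vector given by a semi-infinite monomial of charge m. Then ψ(j)∘ψ*(j)(v) = 0 for all but finitely many integers j > 0, ψ*(j)∘ψ(j)(v) = 0 for all but finitely many integers j ≤ 0, and the resulting finite sum satisfies Σ_{j>0} ψ(j)ψ*(j)(v) − Σ_{j≤0} ψ*(j)ψ(j)(v) = m·v. In other words, the normally ordered charge operator p(0) = Σ_{j>0} ψ(j)ψ*(j) − Σ_{j≤0} ψ*(j)ψ(j) acts on the charge-m subspace 𝓕(m) as multiplication by m. -/

import Mathlib

open scoped Classical

/-- A semi-infinite monomial: a strictly decreasing sequence `i : ℕ → ℤ`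
(written `i₀ > i₁ > i₂ > ⋯`) such that `i n = m - n` for all sufficiently
large `n`, for some integer `m` (the charge). -/
structure SIM : Type where
  seq : ℕ → ℤ
  strictAnti : StrictAnti seq
  charge_exists : ∃ m : ℤ, ∃ N : ℕ, ∀ n ≥ N, seq n = m - n

namespace SIM

/-- `v` has charge `m` if `v n = m - n` for all sufficiently large `n`. -/
def HasCharge (v : SIM) (m : ℤ) : Prop :=
  ∃ N : ℕ, ∀ n ≥ N, v.seq n = m - n

/-- The charge of a semi-infinite monomial. -/
noncomputable def charge (v : SIM) : ℤ := v.charge_exists.choose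

theorem exists_seq_lt (v : SIM) (k : ℤ) : ∃ n, v.seq n < k := by
  obtain ⟨m, N, hN⟩ := v.charge_exists
  refine ⟨max N (m - k + 1).toNat, ?_⟩
  rw [hN _ (le_max_left _ _)]
  have h1 : (m - k + 1).toNat ≤ max N (m - k + 1).toNat := le_max_right _ _
  omega

/-- The position at which `k` is inserted into `v`: the number of entries of `v`
that are greater than `k` (assuming `k` does not occur in `v`). -/
noncomputable def insIdx (v : SIM) (k : ℤ) : ℕ := sInf {n : ℕ | v.seq n < k}

/-- The monomial obtained from `v` by inserting the entry `k`
(meaningful when `k` does not occur among the entries of `v`; in the unused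
case where `k` does occur we simply return `v`). -/
noncomputable def insert (v : SIM) (k : ℤ) : SIM :=
  if h : k ∈ Set.range v.seq then v
  else
    { seq := fun n =>
        if n < v.insIdx k then v.seq n else if n = v.insIdx k then k else v.seq (n - 1)
      strictAnti := by
        have hs : v.seq (v.insIdx k) < k := Nat.sInf_mem (v.exists_seq_lt k)
        have hgt : ∀ n, n < v.insIdx k → k < v.seq n := by
          intro n hn
          have h1 : ¬ v.seq n < k := Nat.notMem_of_lt_sInf hn
          have h2 : v.seq n ≠ k := fun hh => h ⟨n, hh⟩
          omega
        apply strictAnti_nat_of_succ_lt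
        intro n

        rcases lt_trichotomy (n + 1) (v.insIdx k) with h1 | h1 | h1
        · rw [if_pos h1, if_pos (by omega)]
          exact v.strictAnti (Nat.lt_succ_self n)
        · rw [if_neg (by omega), if_pos h1, if_pos (by omega)]
          exact hgt n (by omega)
        · rw [if_neg (by omega), if_neg (by omega)]
          rcases eq_or_lt_of_le (Nat.le_of_lt_succ h1) with h2 | h2
          · rw [if_neg (by omega), if_pos h2.symm]
            simpa [← h2] using hs
          · rw [if_neg (by omega), if_neg (by omega)]
            exact v.strictAnti (by omega)
      charge_exists := by
        obtain ⟨m, N, hN⟩ := v.charge_exists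
        refine ⟨m + 1, max N (v.insIdx k) + 1, fun n hn => ?_⟩

        beta_reduce
        rw [if_neg (by omega), if_neg (by omega), hN (n - 1) (by omega)]
        omega }

/-- The position of the entry `k` in `v` (assuming `k` occurs in `v`). -/
noncomputable def delIdx (v : SIM) (k : ℤ) : ℕ := sInf {n : ℕ | v.seq n ≤ k}

/-- The monomial obtained from `v` by deleting the entry `k`
(meaningful when `k` occurs among the entries of `v`). -/
noncomputable def delete (v : SIM) (k : ℤ) : SIM where
  seq n := if n < v.delIdx k then v.seq n else v.seq (n + 1)
  strictAnti := by
    apply strictAnti_nat_of_succ_lt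
    intro n

    split_ifs <;> exact v.strictAnti (by omega)
  charge_exists := by
    obtain ⟨m, N, hN⟩ := v.charge_exists
    refine ⟨m - 1, max N (v.delIdx k), fun n hn => ?_⟩

    beta_reduce
    rw [if_neg (by omega), hN (n + 1) (by omega)]
    omega

end SIM

/-- The fermionic Fock space: the free ℂ-vector space on the set of all
semi-infinite monomials (of all charges). -/
abbrev Fock : Type := SIM →₀ ℂ

/-- The wedging operator `ψ(k)`: it sends a basis monomial `i₀ > i₁ > ⋯` to `0`
if `k = i_s` for some `s`, and otherwise to `(−1)^s` times the basis monomial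
obtained by inserting `k`, where `s` is the number of entries greater
than `k`. -/
noncomputable def psi (k : ℤ) : Fock →ₗ[ℂ] Fock :=
  Finsupp.lsum ℂ fun v =>
    if k ∈ Set.range v.seq then 0
    else ((-1 : ℂ) ^ v.insIdx k) • Finsupp.lsingle (v.insert k)

/-- The contracting operator `ψ*(k)`: it sends a basis monomial `i₀ > i₁ > ⋯`
to `(−1)^s` times the basis monomial obtained by deleting `i_s` if `k = i_s`,
and to `0` if `k` does not occur among the entries. -/
noncomputable def psiStar (k : ℤ) : Fock →ₗ[ℂ] Fock :=
  Finsupp.lsum ℂ fun v =>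
    if k ∈ Set.range v.seq then ((-1 : ℂ) ^ v.delIdx k) • Finsupp.lsingle (v.delete k)
    else 0

section Aux

open SIM

lemma SIM.ext' {v w : SIM} (h : v.seq = w.seq) : v = w := by
  cases v; cases w; simp only at h; subst h; rfl

lemma Nat.sInf_eq_of_mem {S : Set ℕ} {s : ℕ} (h1 : s ∈ S) (h2 : ∀ n < s, n ∉ S) :
    sInf S = s := by
  refine le_antisymm (Nat.sInf_le h1) ?_
  by_contra hlt
  exact h2 _ (by omega) (Nat.sInf_mem ⟨s, h1⟩)

lemma SIM.seq_injective (v : SIM) : Function.Injective v.seq :=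
  v.strictAnti.injective

lemma SIM.delIdx_seq (v : SIM) (s : ℕ) : v.delIdx (v.seq s) = s := by
  refine Nat.sInf_eq_of_mem (show v.seq s ≤ v.seq s from le_refl _) fun n hn hmem => ?_
  exact absurd (show v.seq n ≤ v.seq s from hmem) (not_le.mpr (v.strictAnti hn))

lemma SIM.seq_delIdx (v : SIM) {j : ℤ} (h : j ∈ Set.range v.seq) :
    v.seq (v.delIdx j) = j := by
  obtain ⟨s, rfl⟩ := h
  rw [v.delIdx_seq]

lemma SIM.delete_seq (v : SIM) (j : ℤ) (n : ℕ) :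
    (v.delete j).seq n = if n < v.delIdx j then v.seq n else v.seq (n + 1) := rfl

lemma SIM.not_mem_delete (v : SIM) {j : ℤ} (h : j ∈ Set.range v.seq) :
    j ∉ Set.range (v.delete j).seq := by
  rintro ⟨n, hn⟩
  rw [v.delete_seq] at hn
  have hs := v.seq_delIdx h
  split_ifs at hn with h1
  · exact absurd (v.seq_injective (hn.trans hs.symm)) (by omega)
  · exact absurd (v.seq_injective (hn.trans hs.symm)) (by omega)

lemma SIM.insIdx_delete (v : SIM) {j : ℤ} (h : j ∈ Set.range v.seq) :
    (v.delete j).insIdx j = v.delIdx j := by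
  have hs := v.seq_delIdx h
  refine Nat.sInf_eq_of_mem ?_ fun n hn hmem => ?_
  · show (v.delete j).seq _ < j
    rw [v.delete_seq, if_neg (by omega)]
    have h2 : v.seq (v.delIdx j + 1) < v.seq (v.delIdx j) := v.strictAnti (by omega)
    omega
  · have : (v.delete j).seq n < j := hmem
    rw [v.delete_seq, if_pos hn, ← hs] at this
    exact absurd ((StrictAnti.lt_iff_gt v.strictAnti).mp this) (by omega)

lemma SIM.insert_delete (v : SIM) {j : ℤ} (h : j ∈ Set.range v.seq) :
    (v.delete j).insert j = v := by
  apply SIM.ext'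
  have hnm := v.not_mem_delete h
  have hs := v.seq_delIdx h
  rw [SIM.insert, dif_neg hnm]
  funext n
  simp only [v.insIdx_delete h]
  rcases lt_trichotomy n (v.delIdx j) with h1 | h1 | h1
  · rw [if_pos h1, v.delete_seq, if_pos h1]
  · rw [if_neg (by omega), if_pos h1, h1, hs]
  · rw [if_neg (by omega), if_neg (by omega), v.delete_seq, if_neg (by omega)]
    congr 1; omega

lemma SIM.insert_seq (v : SIM) {j : ℤ} (h : j ∉ Set.range v.seq) (n : ℕ) :
    (v.insert j).seq n =
      if n < v.insIdx j then v.seq n else if n = v.insIdx j then j else v.seq (n - 1) := by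
  rw [SIM.insert, dif_neg h]

lemma SIM.seq_insIdx_lt (v : SIM) (j : ℤ) : v.seq (v.insIdx j) < j :=
  Nat.sInf_mem (v.exists_seq_lt j)

lemma SIM.lt_seq_of_lt_insIdx (v : SIM) {j : ℤ} (h : j ∉ Set.range v.seq) {n : ℕ}
    (hn : n < v.insIdx j) : j < v.seq n := by
  have h1 : ¬ v.seq n < j := Nat.notMem_of_lt_sInf hn
  have h2 : v.seq n ≠ j := fun hh => h ⟨n, hh⟩
  omega

lemma SIM.mem_insert (v : SIM) {j : ℤ} (h : j ∉ Set.range v.seq) :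
    j ∈ Set.range (v.insert j).seq := by
  refine ⟨v.insIdx j, ?_⟩
  rw [v.insert_seq h, if_neg (by omega), if_pos rfl]

lemma SIM.delIdx_insert (v : SIM) {j : ℤ} (h : j ∉ Set.range v.seq) :
    (v.insert j).delIdx j = v.insIdx j := by
  refine Nat.sInf_eq_of_mem ?_ fun n hn hmem => ?_
  · show (v.insert j).seq _ ≤ j
    rw [v.insert_seq h, if_neg (by omega), if_pos rfl]
  · have : (v.insert j).seq n ≤ j := hmem
    rw [v.insert_seq h, if_pos hn] at this
    exact absurd (v.lt_seq_of_lt_insIdx h hn) (by omega)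

lemma SIM.delete_insert (v : SIM) {j : ℤ} (h : j ∉ Set.range v.seq) :
    (v.insert j).delete j = v := by
  apply SIM.ext'
  funext n
  rw [SIM.delete_seq, v.delIdx_insert h]
  rcases lt_or_ge n (v.insIdx j) with h1 | h1
  · rw [if_pos h1, v.insert_seq h, if_pos h1]
  · rw [if_neg (by omega), v.insert_seq h, if_neg (by omega), if_neg (by omega)]
    congr 1

lemma psiStar_single_mem {j : ℤ} {v : SIM} (h : j ∈ Set.range v.seq) :
    psiStar j (Finsupp.single v 1) =
      ((-1 : ℂ) ^ v.delIdx j) • Finsupp.single (v.delete j) 1 := by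
  rw [psiStar, Finsupp.lsum_single, if_pos h]
  rfl

lemma psiStar_single_not_mem {j : ℤ} {v : SIM} (h : j ∉ Set.range v.seq) :
    psiStar j (Finsupp.single v 1) = 0 := by
  rw [psiStar, Finsupp.lsum_single, if_neg h]
  rfl

lemma psi_single_mem {j : ℤ} {v : SIM} (h : j ∈ Set.range v.seq) :
    psi j (Finsupp.single v 1) = 0 := by
  rw [psi, Finsupp.lsum_single, if_pos h]
  rfl

lemma psi_single_not_mem {j : ℤ} {v : SIM} (h : j ∉ Set.range v.seq) :
    psi j (Finsupp.single v 1) =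
      ((-1 : ℂ) ^ v.insIdx j) • Finsupp.single (v.insert j) 1 := by
  rw [psi, Finsupp.lsum_single, if_neg h]
  rfl

lemma neg_one_pow_smul_neg_one_pow_smul {M : Type*} [AddCommMonoid M] [Module ℂ M]
    (d : ℕ) (x : M) : ((-1 : ℂ) ^ d) • ((-1 : ℂ) ^ d) • x = x := by
  rw [smul_smul, ← pow_add, Even.neg_one_pow ⟨d, rfl⟩, one_smul]

lemma psi_psiStar_single_mem {j : ℤ} {v : SIM} (h : j ∈ Set.range v.seq) :
    psi j (psiStar j (Finsupp.single v 1)) = Finsupp.single v 1 := by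
  rw [psiStar_single_mem h, map_smul, psi_single_not_mem (v.not_mem_delete h),
    v.insIdx_delete h, v.insert_delete h]
  exact neg_one_pow_smul_neg_one_pow_smul _ _

lemma psi_psiStar_single_not_mem {j : ℤ} {v : SIM} (h : j ∉ Set.range v.seq) :
    psi j (psiStar j (Finsupp.single v 1)) = 0 := by
  rw [psiStar_single_not_mem h, map_zero]

lemma psiStar_psi_single_not_mem {j : ℤ} {v : SIM} (h : j ∉ Set.range v.seq) :
    psiStar j (psi j (Finsupp.single v 1)) = Finsupp.single v 1 := by
  rw [psi_single_not_mem h, map_smul, psiStar_single_mem (v.mem_insert h),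
    v.delIdx_insert h, v.delete_insert h]
  exact neg_one_pow_smul_neg_one_pow_smul _ _

lemma psiStar_psi_single_mem {j : ℤ} {v : SIM} (h : j ∈ Set.range v.seq) :
    psiStar j (psi j (Finsupp.single v 1)) = 0 := by
  rw [psi_single_mem h, map_zero]

end Aux

/-- Let `v` be a basis vector of `𝓕` given by a semi-infinite monomial of
charge `m`.  Then `ψ(j)∘ψ*(j)(v) = 0` for all but finitely many `j > 0`,
`ψ*(j)∘ψ(j)(v) = 0` for all but finitely many `j ≤ 0`, and
`Σ_{j>0} ψ(j)ψ*(j)(v) − Σ_{j≤0} ψ*(j)ψ(j)(v) = m·v`: the normally ordered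
charge operator `p(0)` acts on `𝓕(m)` as multiplication by `m`. -/
theorem charge_operator_eq_charge_smul (m : ℤ) (v : SIM) (hv : v.HasCharge m) :
    {j : ℤ | 0 < j ∧ psi j (psiStar j (Finsupp.single v 1)) ≠ 0}.Finite ∧
    {j : ℤ | j ≤ 0 ∧ psiStar j (psi j (Finsupp.single v 1)) ≠ 0}.Finite ∧
    (∑ᶠ j ∈ {j : ℤ | 0 < j}, psi j (psiStar j (Finsupp.single v 1))) -
      (∑ᶠ j ∈ {j : ℤ | j ≤ 0}, psiStar j (psi j (Finsupp.single v 1))) =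
      (m : ℂ) • Finsupp.single v 1 := by
  classical
  obtain ⟨N0, hN0⟩ := hv
  set N' : ℕ := max N0 m.toNat with hN'def
  have hN' : ∀ n ≥ N', v.seq n = m - n := fun n hn =>
    hN0 n (le_trans (le_max_left _ _) hn)
  have hmN : (m.toNat : ℤ) ≤ (N' : ℤ) := by exact_mod_cast le_max_right N0 m.toNat
  have hc : m - (N' : ℤ) ≤ 0 := by omega
  set P : Finset ℕ := (Finset.range N').filter (fun n => 0 < v.seq n) with hPdef
  set Q : Finset ℕ := (Finset.range N').filter (fun n => ¬ 0 < v.seq n) with hQdef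
  set A : Finset ℤ := P.image v.seq with hAdef
  set B : Finset ℤ := Finset.Ioc (m - (N' : ℤ)) 0 \ Q.image v.seq with hBdef
  -- characterization of A
  have hA : ∀ j : ℤ, j ∈ A ↔ 0 < j ∧ j ∈ Set.range v.seq := by
    intro j
    constructor
    · intro hj
      obtain ⟨n, hn, rfl⟩ := Finset.mem_image.mp hj
      rw [hPdef, Finset.mem_filter] at hn
      exact ⟨hn.2, ⟨n, rfl⟩⟩
    · rintro ⟨hj, n, rfl⟩
      refine Finset.mem_image.mpr ⟨n, ?_, rfl⟩
      rw [hPdef, Finset.mem_filter, Finset.mem_range]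
      refine ⟨?_, hj⟩
      by_contra hn
      have := hN' n (by omega)
      omega
  -- characterization of B
  have hB : ∀ j : ℤ, j ∈ B ↔ j ≤ 0 ∧ j ∉ Set.range v.seq := by
    intro j
    rw [hBdef, Finset.mem_sdiff, Finset.mem_Ioc]
    constructor
    · rintro ⟨⟨hj1, hj2⟩, hj3⟩
      refine ⟨hj2, ?_⟩
      rintro ⟨n, rfl⟩
      rcases lt_or_ge n N' with hn | hn
      · exact hj3 (Finset.mem_image.mpr ⟨n, by
          rw [hQdef, Finset.mem_filter, Finset.mem_range]; exact ⟨hn, by omega⟩, rfl⟩)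
      · have := hN' n hn
        omega
    · rintro ⟨hj, hr⟩
      have hgt : m - (N' : ℤ) < j := by
        by_contra hle
        have h1 : (N' : ℤ) ≤ m - j := by omega
        have h2 : ((m - j).toNat : ℤ) = m - j := by omega
        have h3 : N' ≤ (m - j).toNat := by omega
        have h4 := hN' ((m - j).toNat) h3
        exact hr ⟨(m - j).toNat, by omega⟩
      refine ⟨⟨hgt, hj⟩, fun hmem => ?_⟩
      obtain ⟨n, _, rfl⟩ := Finset.mem_image.mp hmem
      exact hr ⟨n, rfl⟩
  -- cardinality facts
  have hPQ : P.card + Q.card = N' := by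
    rw [hPdef, hQdef, Finset.card_filter_add_card_filter_not, Finset.card_range]
  have hAcard : A.card = P.card := Finset.card_image_of_injective _ v.seq_injective
  have hQsub : Q.image v.seq ⊆ Finset.Ioc (m - (N' : ℤ)) 0 := by
    intro j hj
    obtain ⟨n, hn, rfl⟩ := Finset.mem_image.mp hj
    rw [hQdef, Finset.mem_filter, Finset.mem_range] at hn
    have h1 := hN' N' (le_refl _)
    have h2 : v.seq N' < v.seq n := v.strictAnti hn.1
    rw [Finset.mem_Ioc]
    omega
  have hQle : Q.card ≤ (Finset.Ioc (m - (N' : ℤ)) 0).card := by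
    rw [← Finset.card_image_of_injective Q v.seq_injective]
    exact Finset.card_le_card hQsub
  have hBcard : B.card = (Finset.Ioc (m - (N' : ℤ)) 0).card - Q.card := by
    rw [hBdef, Finset.card_sdiff_of_subset hQsub, Finset.card_image_of_injective _ v.seq_injective]
  have hIoc : ((Finset.Ioc (m - (N' : ℤ)) 0).card : ℤ) = (N' : ℤ) - m := by
    rw [Int.card_Ioc]
    omega
  have hZ : (A.card : ℤ) - (B.card : ℤ) = m := by omega
  have hC : (A.card : ℂ) - (B.card : ℂ) = (m : ℂ) := by exact_mod_cast hZ
  -- finiteness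
  have hsub1 : {j : ℤ | 0 < j ∧ psi j (psiStar j (Finsupp.single v 1)) ≠ 0} ⊆ ↑A := by
    rintro j ⟨hj, hne⟩
    have hjr : j ∈ Set.range v.seq := by
      by_contra hr
      exact hne (psi_psiStar_single_not_mem hr)
    exact Finset.mem_coe.mpr ((hA j).mpr ⟨hj, hjr⟩)
  have hsub2 : {j : ℤ | j ≤ 0 ∧ psiStar j (psi j (Finsupp.single v 1)) ≠ 0} ⊆ ↑B := by
    rintro j ⟨hj, hne⟩
    have hjr : j ∉ Set.range v.seq := by
      intro hr
      exact hne (psiStar_psi_single_mem hr)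
    exact Finset.mem_coe.mpr ((hB j).mpr ⟨hj, hjr⟩)
  refine ⟨A.finite_toSet.subset hsub1, B.finite_toSet.subset hsub2, ?_⟩
  -- first sum
  have hsum1 : (∑ᶠ j ∈ {j : ℤ | 0 < j}, psi j (psiStar j (Finsupp.single v 1))) =
      A.card • Finsupp.single v 1 := by
    rw [finsum_mem_eq_sum_of_inter_support_eq _ (t := A)]
    · rw [Finset.sum_congr rfl (fun j hj => psi_psiStar_single_mem ((hA j).mp hj).2),
        Finset.sum_const]
    · ext j
      simp only [Set.mem_inter_iff, Set.mem_setOf_eq, Function.mem_support, Finset.coe_sort_coe,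
        Finset.mem_coe]
      constructor
      · rintro ⟨hj, hne⟩
        have hjr : j ∈ Set.range v.seq := by
          by_contra hr
          exact hne (psi_psiStar_single_not_mem hr)
        exact ⟨(hA j).mpr ⟨hj, hjr⟩, hne⟩
      · rintro ⟨hj, hne⟩
        exact ⟨((hA j).mp hj).1, hne⟩
  have hsum2 : (∑ᶠ j ∈ {j : ℤ | j ≤ 0}, psiStar j (psi j (Finsupp.single v 1))) =
      B.card • Finsupp.single v 1 := by
    rw [finsum_mem_eq_sum_of_inter_support_eq _ (t := B)]
    · rw [Finset.sum_congr rfl (fun j hj => psiStar_psi_single_not_mem ((hB j).mp hj).2),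
        Finset.sum_const]
    · ext j
      simp only [Set.mem_inter_iff, Set.mem_setOf_eq, Function.mem_support, Finset.coe_sort_coe,
        Finset.mem_coe]
      constructor
      · rintro ⟨hj, hne⟩
        have hjr : j ∉ Set.range v.seq := by
          intro hr
          exact hne (psiStar_psi_single_mem hr)
        exact ⟨(hB j).mpr ⟨hj, hjr⟩, hne⟩
      · rintro ⟨hj, hne⟩
        exact ⟨((hB j).mp hj).1, hne⟩
  rw [hsum1, hsum2, ← Nat.cast_smul_eq_nsmul ℂ, ← Nat.cast_smul_eq_nsmul ℂ, ← sub_smul, hC]
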